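/- Let M, N ≥ 1, let γ̄ ∈ ℝ_{>0}^{(M)^N} be a tensor with strictly positive entries, let ρ ∈ ℝ_{>0}^M, and fix i ∈ {1,...,N}. Define C_i as the set of nonnegative tensors γ ∈ ℝ_{≥0}^{(M)^N} whose i-th marginal equals ρ, i.e. ∑_{j_1,...,j_{i-1},j_{i+1},...,j_N} γ_{j_1,...,j_N} = ρ_{j_i} for every j_i ∈ {1,...,M}. Then the tensor P defined by P_{j_1,...,j_N} = ρ_{j_i} · γ̄_{j_1,...,j_N} / (∑_{k_1,...,k_{i-1},k_{i+1},...,k_N} γ̄_{k_1,...,k_{i-1},j_i,k_{i+1},...,k_N}) belongs to C_i and is the unique minimizer over γ ∈ C_i of the Kullback–Leibler divergence KL(γ|γ̄) = ∑_{j_1,...,j_N} γ_{j_1,...,j_N} log(γ_{j_1,...,j_N}/γ̄_{j_1,...,j_N}). -/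

import Mathlib

/-- For `x ≥ 0` and `y > 0`, `x - y ≤ x log(x/y)`. -/
lemma kl_term_ge (x y : ℝ) (hx : 0 ≤ x) (hy : 0 < y) :
    x - y ≤ x * Real.log (x / y) := by
  rcases eq_or_lt_of_le hx with h | h
  · simp [← h]; linarith
  · have hlog : Real.log (y / x) ≤ y / x - 1 :=
      Real.log_le_sub_one_of_pos (div_pos hy h)
    have hinv : Real.log (x / y) = - Real.log (y / x) := by
      rw [← Real.log_inv, inv_div]
    have hxy : x * (y / x) = y := by field_simp
    nlinarith [mul_le_mul_of_nonneg_left hlog (le_of_lt h)]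

/-- Equality case: if `x log(x/y) = x - y` with `x ≥ 0`, `y > 0`, then `x = y`. -/
lemma kl_term_eq (x y : ℝ) (hx : 0 ≤ x) (hy : 0 < y)
    (h : x * Real.log (x / y) - (x - y) = 0) : x = y := by
  rcases eq_or_lt_of_le hx with h0 | h0
  · exfalso; rw [← h0] at h; simp at h; linarith
  · by_contra hne
    have hne' : y / x ≠ 1 := by
      intro hc
      apply hne
      field_simp at hc
      linarith
    have hlog : Real.log (y / x) < y / x - 1 :=
      Real.log_lt_sub_one_of_pos (div_pos hy h0) hne'
    have hinv : Real.log (x / y) = - Real.log (y / x) := by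
      rw [← Real.log_inv, inv_div]
    have hxy : x * (y / x) = y := by field_simp
    nlinarith [mul_lt_mul_of_pos_left hlog h0]

/-- The explicit formula for the Kullback–Leibler projection of a positive
tensor `γbar` onto the set `C` of nonnegative tensors whose `i`-th marginal is `ρ`:
the tensor `P` defined by the marginal-rescaling formula belongs to `C` and is the
unique minimizer of `KL(·|γbar)` over `C`. -/
theorem bregman_projection_marginal_constraint
    (M N : ℕ) (hM : 1 ≤ M) (hN : 1 ≤ N)
    (γbar : (Fin N → Fin M) → ℝ) (hγbar : ∀ j, 0 < γbar j)
    (ρ : Fin M → ℝ) (hρ : ∀ m, 0 < ρ m) (i : Fin N)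
    (C : Set ((Fin N → Fin M) → ℝ))
    (hC : C = {γ | (∀ j, 0 ≤ γ j) ∧
      ∀ m : Fin M,
        ∑ j ∈ Finset.univ.filter (fun j : Fin N → Fin M => j i = m), γ j = ρ m})
    (KL : ((Fin N → Fin M) → ℝ) → ℝ)
    (hKL : KL = fun γ => ∑ j, γ j * Real.log (γ j / γbar j))
    (P : (Fin N → Fin M) → ℝ)
    (hP : P = fun j => ρ (j i) * γbar j /
      ∑ k ∈ Finset.univ.filter (fun k : Fin N → Fin M => k i = j i), γbar k) :
    P ∈ C ∧ (∀ γ ∈ C, KL P ≤ KL γ) ∧ (∀ γ ∈ C, KL γ ≤ KL P → γ = P) := by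
  classical
  -- fibers and fiber sums
  set F : Fin M → Finset (Fin N → Fin M) :=
    fun m => Finset.univ.filter (fun j : Fin N → Fin M => j i = m) with hF
  set s : Fin M → ℝ := fun m => ∑ k ∈ F m, γbar k with hs
  have hFne : ∀ m, (F m).Nonempty := fun m => ⟨fun _ => m, by simp [hF]⟩
  have hspos : ∀ m, 0 < s m :=
    fun m => Finset.sum_pos (fun k _ => hγbar k) (hFne m)
  have hPval : ∀ j, P j = ρ (j i) * γbar j / s (j i) := by
    intro j; rw [hP]
  have hPpos : ∀ j, 0 < P j := by
    intro j
    rw [hPval]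
    exact div_pos (mul_pos (hρ _) (hγbar _)) (hspos _)
  -- ratio simplification
  have hratio : ∀ j, P j / γbar j = ρ (j i) / s (j i) := by
    intro j
    rw [hPval]
    field_simp
    rw [mul_comm (γbar j) (s (j i)), mul_div_mul_right _ _ (ne_of_gt (hγbar j))]
  -- marginal of P
  have hPmarg : ∀ m, ∑ j ∈ F m, P j = ρ m := by
    intro m
    have : ∀ j ∈ F m, P j = ρ m / s m * γbar j := by
      intro j hj
      have hji : j i = m := by simpa [hF] using hj
      rw [hPval, hji]; ring
    rw [Finset.sum_congr rfl this, ← Finset.mul_sum]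
    have hsm : (∑ k ∈ F m, γbar k) = s m := rfl
    rw [hsm]
    field_simp
    rw [mul_div_assoc, div_self (ne_of_gt (hspos m)), mul_one]
  -- fiberwise sum
  have hfib : ∀ g : (Fin N → Fin M) → ℝ,
      ∑ j, g j = ∑ m, ∑ j ∈ F m, g j := by
    intro g
    exact (Finset.sum_fiberwise Finset.univ (fun j => j i) g).symm
  -- sum of γ j * log(ρ(ji)/s(ji)) for any tensor with marginal ρ
  have hlogsum : ∀ γ : (Fin N → Fin M) → ℝ,
      (∀ m, ∑ j ∈ F m, γ j = ρ m) →
      ∑ j, γ j * Real.log (ρ (j i) / s (j i)) =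
        ∑ m, ρ m * Real.log (ρ m / s m) := by
    intro γ hγ
    rw [hfib]
    refine Finset.sum_congr rfl fun m _ => ?_
    have : ∀ j ∈ F m, γ j * Real.log (ρ (j i) / s (j i)) =
        γ j * Real.log (ρ m / s m) := by
      intro j hj
      have hji : j i = m := by simpa [hF] using hj
      rw [hji]
    rw [Finset.sum_congr rfl this, ← Finset.sum_mul, hγ m]
  -- KL P
  have hKLP : KL P = ∑ m, ρ m * Real.log (ρ m / s m) := by
    rw [hKL]
    have : ∀ j, P j * Real.log (P j / γbar j) =
        P j * Real.log (ρ (j i) / s (j i)) := fun j => by rw [hratio]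
    simp only [this]
    exact hlogsum P hPmarg
  -- P ∈ C
  have hPC : P ∈ C := by
    rw [hC]
    exact ⟨fun j => (hPpos j).le, hPmarg⟩
  -- key decomposition for γ ∈ C
  have hdecomp : ∀ γ, γ ∈ C →
      KL γ = (∑ j, γ j * Real.log (γ j / P j)) + KL P := by
    intro γ hγ
    rw [hC] at hγ
    obtain ⟨hγ0, hγm⟩ := hγ
    rw [hKLP]
    simp only [hKL]
    rw [← hlogsum γ hγm, ← Finset.sum_add_distrib]
    refine Finset.sum_congr rfl fun j _ => ?_
    rcases eq_or_lt_of_le (hγ0 j) with h0 | h0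
    · simp [← h0]
    · have hsplit : Real.log (γ j / γbar j) =
          Real.log (γ j / P j) + Real.log (ρ (j i) / s (j i)) := by
        rw [← hratio j, Real.log_div (ne_of_gt h0) (ne_of_gt (hγbar j)),
          Real.log_div (ne_of_gt h0) (ne_of_gt (hPpos j)),
          Real.log_div (ne_of_gt (hPpos j)) (ne_of_gt (hγbar j))]
        ring
      rw [hsplit]; ring
  -- sum of γ - P is zero on C
  have hsum0 : ∀ γ, γ ∈ C → ∑ j, (γ j - P j) = 0 := by
    intro γ hγ
    rw [hC] at hγ
    rw [Finset.sum_sub_distrib, hfib γ, hfib P]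
    rw [Finset.sum_congr rfl (fun m _ => hγ.2 m),
      Finset.sum_congr rfl (fun m _ => hPmarg m), sub_self]
  -- per-term nonnegativity of the excess
  have hterm : ∀ γ, γ ∈ C → ∀ j,
      0 ≤ γ j * Real.log (γ j / P j) - (γ j - P j) := by
    intro γ hγ j
    rw [hC] at hγ
    have := kl_term_ge (γ j) (P j) (hγ.1 j) (hPpos j)
    linarith
  have hexcess : ∀ γ, γ ∈ C →
      ∑ j, γ j * Real.log (γ j / P j) =
        ∑ j, (γ j * Real.log (γ j / P j) - (γ j - P j)) := by
    intro γ hγ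
    rw [Finset.sum_sub_distrib, hsum0 γ hγ, sub_zero]
  refine ⟨hPC, ?_, ?_⟩
  · intro γ hγ
    rw [hdecomp γ hγ]
    have h1 : 0 ≤ ∑ j, γ j * Real.log (γ j / P j) := by
      rw [hexcess γ hγ]
      exact Finset.sum_nonneg fun j _ => hterm γ hγ j
    linarith
  · intro γ hγ hle
    have heq : ∑ j, (γ j * Real.log (γ j / P j) - (γ j - P j)) = 0 := by
      have h1 := hdecomp γ hγ
      have h2 := hexcess γ hγ
      have h3 : 0 ≤ ∑ j, (γ j * Real.log (γ j / P j) - (γ j - P j)) :=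
        Finset.sum_nonneg fun j _ => hterm γ hγ j
      linarith
    have hall := (Finset.sum_eq_zero_iff_of_nonneg
      (fun j _ => hterm γ hγ j)).mp heq
    rw [hC] at hγ
    funext j
    exact kl_term_eq (γ j) (P j) (hγ.1 j) (hPpos j) (hall j (Finset.mem_univ j))
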